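/- Let a ∈ (0,1], let S ⊆ Lim(ω₁) be stationary, and let ⟨A_δ : δ ∈ S⟩, with A_δ = {α_{δ,n} : n < ω} strictly increasing cofinal in δ, witness ♣_S^{inf≥a}. For Y ⊆ ω₁ let S(Y) = {δ ∈ S : liminf_n |{k < n : α_{δ,k} ∈ Y}|/n ≥ a}. Let ⟨X_i : i < ω₁⟩ be a family of pairwise disjoint uncountable subsets of ω₁. Then there exist an uncountable W ⊆ ω₁ and sets ⟨Y_i : i ∈ W⟩ with each Y_i an uncountable subset of X_i, such that for every i ∈ W and every uncountable Z ⊆ Y_i, the set S(Z) \ ⋃_{j ∈ W, j < i} S(Y_j) is stationary in ω₁. -/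

import Mathlib

open Filter Set

noncomputable def omega1 : Ordinal.{0} := (Cardinal.aleph 1).ord

/-- The set of countable limit ordinals, `Lim(ω₁)`. -/
def limOmega1 : Set Ordinal.{0} := {δ | δ < omega1 ∧ Order.IsSuccLimit δ}

/-- `C` is a closed unbounded subset of `ω₁`. -/
def IsClubIn (C : Set Ordinal.{0}) : Prop :=
  C ⊆ Set.Iio omega1 ∧
  (∀ δ, δ < omega1 → Order.IsSuccLimit δ → (∀ β < δ, ∃ γ ∈ C, β < γ ∧ γ < δ) → δ ∈ C) ∧
  (∀ β, β < omega1 → ∃ γ ∈ C, β < γ)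

/-- `S` is a stationary subset of `ω₁`. -/
def IsStatIn (S : Set Ordinal.{0}) : Prop :=
  S ⊆ Set.Iio omega1 ∧ ∀ C, IsClubIn C → (S ∩ C).Nonempty

open scoped Classical in
/-- `|{k < n : α k ∈ A}| / n` as a real number. -/
noncomputable def hitRatio (α : ℕ → Ordinal.{0}) (A : Set Ordinal.{0}) (n : ℕ) : ℝ :=
  ((Finset.range n).filter (fun k => α k ∈ A)).card / n

/-- `α` assigns to each `δ ∈ S` a strictly increasing sequence cofinal in `δ`. -/
def GoodSeq (S : Set Ordinal.{0}) (α : Ordinal.{0} → ℕ → Ordinal.{0}) : Prop :=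
  ∀ δ ∈ S, StrictMono (α δ) ∧ (∀ n, α δ n < δ) ∧ (∀ β < δ, ∃ n, β < α δ n)

/-- The principle `♣_S^{inf ≥ a}`. -/
def ClubSuitInf (S : Set Ordinal.{0}) (a : ℝ) : Prop :=
  ∃ α : Ordinal.{0} → ℕ → Ordinal.{0}, GoodSeq S α ∧
    ∀ A : Set Ordinal.{0}, A ⊆ Set.Iio omega1 → ¬ A.Countable →
      ∃ δ ∈ S, a ≤ Filter.liminf (hitRatio (α δ) A) Filter.atTop

/-- The principle `♣_S^{sup ≥ a}`. -/
def ClubSuitSup (S : Set Ordinal.{0}) (a : ℝ) : Prop :=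
  ∃ α : Ordinal.{0} → ℕ → Ordinal.{0}, GoodSeq S α ∧
    ∀ A : Set Ordinal.{0}, A ⊆ Set.Iio omega1 → ¬ A.Countable →
      ∃ δ ∈ S, a ≤ Filter.limsup (hitRatio (α δ) A) Filter.atTop

/-- The diamond principle `◊` on `ω₁`. -/
def DiamondOmega1 : Prop :=
  ∃ B : Ordinal.{0} → Set Ordinal.{0}, (∀ δ ∈ limOmega1, B δ ⊆ Set.Iio δ) ∧
    ∀ A : Set Ordinal.{0}, A ⊆ Set.Iio omega1 →
      IsStatIn {δ ∈ limOmega1 | A ∩ Set.Iio δ = B δ}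

namespace Claim64

lemma omega1_isLimit : Order.IsSuccLimit omega1 :=
  Cardinal.isSuccLimit_ord (Cardinal.aleph0_le_aleph 1)

lemma countable_Iio {β : Ordinal.{0}} (hβ : β < omega1) : (Set.Iio β).Countable := by
  rw [Cardinal.countable_iff_lt_aleph_one, Ordinal.mk_Iio_ordinal, Cardinal.lift_lt_aleph_one]
  exact Cardinal.lt_ord.mp hβ

lemma not_countable_Iio : ¬ (Set.Iio omega1).Countable := by
  rw [Cardinal.countable_iff_lt_aleph_one, Ordinal.mk_Iio_ordinal, Cardinal.lift_lt_aleph_one,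
    omega1, Cardinal.card_ord]
  exact lt_irrefl _

lemma isClubIn_Iio : IsClubIn (Set.Iio omega1) :=
  ⟨subset_rfl, fun δ hδ _ _ => hδ, fun β hβ => ⟨Order.succ β, omega1_isLimit.succ_lt hβ, Order.lt_succ β⟩⟩

lemma stat_mono {A B : Set Ordinal.{0}} (hAB : A ⊆ B) (hB : B ⊆ Set.Iio omega1)
    (hA : IsStatIn A) : IsStatIn B :=
  ⟨hB, fun C hC => ((hA.2 C hC).imp fun _ hδ => ⟨hAB hδ.1, hδ.2⟩)⟩

lemma stat_nonempty {A : Set Ordinal.{0}} (hA : IsStatIn A) : A.Nonempty := by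
  obtain ⟨δ, hδ, _⟩ := hA.2 _ isClubIn_Iio; exact ⟨δ, hδ⟩

lemma unbounded_of_not_countable {Z : Set Ordinal.{0}} (hZ : Z ⊆ Set.Iio omega1)
    (hZc : ¬ Z.Countable) {β : Ordinal.{0}} (hβ : β < omega1) : ∃ z ∈ Z, β < z := by
  by_contra h
  push_neg at h
  exact hZc ((countable_Iio (omega1_isLimit.succ_lt hβ)).mono
    (fun z hz => Order.lt_succ_iff.mpr (h z hz)))

lemma club_not_countable {C : Set Ordinal.{0}} (hC : IsClubIn C) : ¬ C.Countable := by
  intro hcc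
  have hne : C.Nonempty := by
    obtain ⟨γ, hγ, _⟩ := hC.2.2 0 omega1_isLimit.pos; exact ⟨γ, hγ⟩
  obtain ⟨e, he⟩ := hcc.exists_eq_range hne
  have hsup : iSup e < omega1 :=
    by rw [omega1, Cardinal.ord_aleph]; exact Ordinal.iSup_lt_omega_one (f := e) (fun n => by rw [← Cardinal.ord_aleph]; exact hC.1 (by rw [he]; exact ⟨n, rfl⟩))
  obtain ⟨γ, hγC, hγgt⟩ := hC.2.2 _ hsup
  have hle : γ ≤ iSup e := by
    have : γ ∈ range e := by rw [← he]; exact hγC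
    obtain ⟨n, rfl⟩ := this
    exact Ordinal.le_iSup e n
  exact absurd hγgt (not_lt.mpr hle)

lemma isClubIn_iInter {f : ℕ → Set Ordinal.{0}} (hf : ∀ n, IsClubIn (f n)) :
    IsClubIn (⋂ n, f n) := by
  refine ⟨(Set.iInter_subset f 0).trans (hf 0).1, ?_, ?_⟩
  · intro δ hδ hlim hcof
    refine Set.mem_iInter.mpr fun n => (hf n).2.1 δ hδ hlim ?_
    intro β hβ
    obtain ⟨γ, hγ, h1, h2⟩ := hcof β hβ
    exact ⟨γ, Set.mem_iInter.mp hγ n, h1, h2⟩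
  · intro β hβ
    have next : ∀ (n : ℕ) (x : Ordinal.{0}), ∃ γ, x < omega1 → (γ ∈ f n ∧ x < γ ∧ γ < omega1) := by
      intro n x
      by_cases hx : x < omega1
      · obtain ⟨γ, hγ, hxγ⟩ := (hf n).2.2 x hx
        exact ⟨γ, fun _ => ⟨hγ, hxγ, (hf n).1 hγ⟩⟩
      · exact ⟨0, fun h => absurd h hx⟩
    choose g hg using next
    let x : ℕ → Ordinal.{0} := fun k =>
      Nat.rec (Order.succ β)
        (fun k xk => max (Order.succ xk) ((Finset.range (k + 1)).sup fun n => g n xk)) k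
    have hxsucc : ∀ k, x (k+1) =
        max (Order.succ (x k)) ((Finset.range (k + 1)).sup fun n => g n (x k)) := fun _ => rfl
    have hxlt : ∀ k, x k < omega1 := by
      intro k
      induction k with
      | zero => exact omega1_isLimit.succ_lt hβ
      | succ k ih =>
        rw [hxsucc]
        apply max_lt (omega1_isLimit.succ_lt ih)
        refine (Finset.sup_lt_iff ?_).mpr fun n _ => (hg n (x k) ih).2.2
        exact omega1_isLimit.pos
    have hxmono : StrictMono x := strictMono_nat_of_lt_succ fun k =>
      lt_of_lt_of_le (Order.lt_succ _) (le_max_left _ _)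
    set γ := iSup x with hγdef
    have hγlt : γ < omega1 := by rw [omega1, Cardinal.ord_aleph]; exact Ordinal.iSup_lt_omega_one (f := x) (fun k => by rw [← Cardinal.ord_aleph]; exact hxlt k)
    have hltγ : ∀ k, x k < γ := fun k =>
      lt_of_lt_of_le (hxmono (Nat.lt_succ_self k)) (Ordinal.le_iSup x (k+1))
    have hex : ∀ b, b < γ → ∃ k, b < x k := by
      intro b hb
      apply Classical.byContradiction
      intro hcon
      push_neg at hcon
      exact absurd hb (not_lt.mpr (ciSup_le' hcon))
    have hγlim : Order.IsSuccLimit γ := by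
      rw [Ordinal.isSuccLimit_iff, Order.isSuccPrelimit_iff_succ_lt]
      constructor
      · intro h0
        have := hltγ 0
        rw [h0] at this
        exact absurd this (by simp)
      · intro b hb
        obtain ⟨k, hk⟩ := hex b hb
        exact lt_of_le_of_lt (Order.succ_le_of_lt hk) (hltγ k)
    have hγmem : ∀ n, γ ∈ f n := by
      intro n
      apply (hf n).2.1 γ hγlt hγlim
      intro b hb
      obtain ⟨k, hk⟩ := hex b hb
      have hbk' : b < x (max k n) := lt_of_lt_of_le hk (hxmono.monotone (le_max_left k n))
      refine ⟨g n (x (max k n)), (hg n _ (hxlt _)).1,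
        lt_trans hbk' (hg n _ (hxlt _)).2.1, ?_⟩
      have h1 : g n (x (max k n)) ≤ x (max k n + 1) := by
        rw [hxsucc]
        refine le_trans ?_ (le_max_right _ _)
        exact Finset.le_sup (f := fun m => g m (x (max k n)))
          (Finset.mem_range.mpr (Nat.lt_succ_of_le (le_max_right k n)))
      exact lt_of_le_of_lt h1 (hltγ (max k n + 1))
    exact ⟨γ, Set.mem_iInter.mpr hγmem, lt_trans (Order.lt_succ β) (hltγ 0)⟩

lemma stat_diff {T : Set Ordinal.{0}} (hT : IsStatIn T) {J : Set Ordinal.{0}} (hJ : J.Countable)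
    (B : Ordinal.{0} → Set Ordinal.{0}) (hB : ∀ j ∈ J, ¬ IsStatIn (T ∩ B j)) :
    IsStatIn (T \ ⋃ j ∈ J, B j) := by
  refine ⟨fun δ hδ => hT.1 hδ.1, ?_⟩
  intro C hC
  rcases J.eq_empty_or_nonempty with hJe | hJne
  · obtain ⟨δ, hδT, hδC⟩ := hT.2 C hC
    exact ⟨δ, ⟨hδT, by simp [hJe]⟩, hδC⟩
  · obtain ⟨e, he⟩ := hJ.exists_eq_range hJne
    have hclub : ∀ n : ℕ, ∃ Cn, IsClubIn Cn ∧ T ∩ B (e n) ∩ Cn = ∅ := by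
      intro n
      have hj : e n ∈ J := by rw [he]; exact ⟨n, rfl⟩
      have hsub : T ∩ B (e n) ⊆ Set.Iio omega1 := fun δ hδ => hT.1 hδ.1
      have h2 := (not_and.mp (hB _ hj)) hsub
      push_neg at h2
      obtain ⟨Cn, hCn, hCne⟩ := h2
      exact ⟨Cn, hCn, hCne⟩
    choose Cn hCn hCne using hclub
    have hF : ∀ n : ℕ, IsClubIn (Nat.rec C (fun k _ => Cn k) n : Set Ordinal.{0}) := by
      intro n
      cases n with
      | zero => exact hC
      | succ k => exact hCn k
    obtain ⟨δ, hδT, hδD⟩ := hT.2 _ (isClubIn_iInter hF)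
    have hδC : δ ∈ C := Set.mem_iInter.mp hδD 0
    refine ⟨δ, ⟨hδT, ?_⟩, hδC⟩
    intro hmem
    obtain ⟨j, hj, hδB⟩ := Set.mem_iUnion₂.mp hmem
    rw [he] at hj
    obtain ⟨n, rfl⟩ := hj
    have hbad : δ ∈ T ∩ B (e n) ∩ Cn n := ⟨⟨hδT, hδB⟩, Set.mem_iInter.mp hδD (n+1)⟩
    rw [hCne n] at hbad
    exact hbad


lemma hr_nonneg (β : ℕ → Ordinal.{0}) (A : Set Ordinal.{0}) (n : ℕ) : 0 ≤ hitRatio β A n := by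
  unfold hitRatio; positivity

lemma hr_le_one (β : ℕ → Ordinal.{0}) (A : Set Ordinal.{0}) (n : ℕ) : hitRatio β A n ≤ 1 := by
  classical
  unfold hitRatio
  rcases Nat.eq_zero_or_pos n with rfl | hn
  · simp
  · rw [div_le_one (by exact_mod_cast hn)]
    exact_mod_cast (Finset.card_filter_le _ _).trans (Finset.card_range n).le

lemma hr_mono {A B : Set Ordinal.{0}} (h : A ⊆ B) (β : ℕ → Ordinal.{0}) (n : ℕ) :
    hitRatio β A n ≤ hitRatio β B n := by
  classical
  unfold hitRatio
  rcases Nat.eq_zero_or_pos n with rfl | hn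
  · simp
  · refine (div_le_div_iff_of_pos_right (by exact_mod_cast hn)).mpr ?_
    have hsub : (Finset.range n).filter (fun k => β k ∈ A) ⊆
        (Finset.range n).filter (fun k => β k ∈ B) := by
      intro k hk
      rw [Finset.mem_filter] at hk ⊢
      exact ⟨hk.1, h hk.2⟩
    exact_mod_cast Finset.card_le_card hsub

lemma hr_bddBelow (β : ℕ → Ordinal.{0}) (A : Set Ordinal.{0}) :
    IsBoundedUnder (· ≥ ·) atTop (hitRatio β A) :=
  isBoundedUnder_of ⟨0, fun n => hr_nonneg β A n⟩

lemma hr_bddAbove (β : ℕ → Ordinal.{0}) (A : Set Ordinal.{0}) :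
    IsBoundedUnder (· ≤ ·) atTop (hitRatio β A) :=
  isBoundedUnder_of ⟨1, fun n => hr_le_one β A n⟩

lemma hr_cobdd (β : ℕ → Ordinal.{0}) (A : Set Ordinal.{0}) :
    IsCoboundedUnder (· ≥ ·) atTop (hitRatio β A) :=
  (hr_bddAbove β A).isCoboundedUnder_ge

lemma lim_mono {A B : Set Ordinal.{0}} (h : A ⊆ B) (β : ℕ → Ordinal.{0}) :
    liminf (hitRatio β A) atTop ≤ liminf (hitRatio β B) atTop :=
  liminf_le_liminf (Eventually.of_forall fun n => hr_mono h β n) (hr_bddBelow β A) (hr_cobdd β B)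

lemma lim_le_one (β : ℕ → Ordinal.{0}) (A : Set Ordinal.{0}) :
    liminf (hitRatio β A) atTop ≤ (1:ℝ) := by
  have h := liminf_le_liminf (u := hitRatio β A) (v := fun _ => (1:ℝ))
    (Eventually.of_forall fun n => hr_le_one β A n) (hr_bddBelow β A)
    ((isBoundedUnder_of ⟨1, fun _ => le_rfl⟩).isCoboundedUnder_ge)
  rwa [liminf_const] at h

lemma hits_infinite {a : ℝ} (ha0 : 0 < a) {β : ℕ → Ordinal.{0}} {A : Set Ordinal.{0}}
    (h : a ≤ liminf (hitRatio β A) atTop) (N : ℕ) : ∃ k, N ≤ k ∧ β k ∈ A := by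
  by_contra hc
  push_neg at hc
  have hub : ∀ n, hitRatio β A n ≤ (N:ℝ) / n := by
    intro n
    classical
    unfold hitRatio
    rcases Nat.eq_zero_or_pos n with rfl | hn
    · simp
    · refine (div_le_div_iff_of_pos_right (by exact_mod_cast hn)).mpr ?_
      have hsub : (Finset.range n).filter (fun k => β k ∈ A) ⊆ Finset.range N := by
        intro k hk
        rw [Finset.mem_range]
        by_contra hkN
        exact hc k (le_of_not_gt hkN) (Finset.mem_filter.mp hk).2
      exact_mod_cast (Finset.card_le_card hsub).trans_eq (Finset.card_range N)
  have hlim : liminf (hitRatio β A) atTop ≤ liminf (fun n : ℕ => (N:ℝ)/n) atTop := by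
    refine liminf_le_liminf (Eventually.of_forall hub) (hr_bddBelow β A) ?_
    refine (isBoundedUnder_of ⟨(N:ℝ), fun n => ?_⟩).isCoboundedUnder_ge
    rcases Nat.eq_zero_or_pos n with rfl | hn
    · simp
    · exact div_le_self (by positivity) (by exact_mod_cast hn)
  rw [(tendsto_const_div_atTop_nhds_zero_nat (N:ℝ)).liminf_eq] at hlim
  linarith


lemma hr_sum_le_one {β : ℕ → Ordinal.{0}} {X : Ordinal.{0} → Set Ordinal.{0}}
    {G : Finset Ordinal.{0}}
    (hd : ∀ j ∈ G, ∀ l ∈ G, j ≠ l → Disjoint (X j) (X l)) (n : ℕ) :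
    ∑ j ∈ G, hitRatio β (X j) n ≤ 1 := by
  classical
  unfold hitRatio
  rcases Nat.eq_zero_or_pos n with rfl | hn
  · simp
  · rw [← Finset.sum_div, div_le_one (by exact_mod_cast hn)]
    have hcard : ∑ j ∈ G, ((Finset.range n).filter (fun k => β k ∈ X j)).card ≤ n := by
      rw [← Finset.card_biUnion]
      · exact (Finset.card_le_card (Finset.biUnion_subset.mpr fun j _ =>
          Finset.filter_subset _ _)).trans_eq (Finset.card_range n)
      · intro j hj l hl hjl
        rw [Function.onFun, Finset.disjoint_left]
        intro k hk hk'
        exact Set.disjoint_left.mp (hd j hj l hl hjl)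
          (Finset.mem_filter.mp hk).2 (Finset.mem_filter.mp hk').2
    exact_mod_cast hcard

lemma lim_sum_ge (β : ℕ → Ordinal.{0}) (X : Ordinal.{0} → Set Ordinal.{0})
    (G : Finset Ordinal.{0}) :
    ∑ j ∈ G, liminf (hitRatio β (X j)) atTop ≤
      liminf (fun n => ∑ j ∈ G, hitRatio β (X j) n) atTop := by
  classical
  induction G using Finset.induction_on with
  | empty => simp [liminf_const]
  | insert _ _ ha ih =>
    rename_i c s
    rw [Finset.sum_insert ha]
    have hfun : (fun n => ∑ j ∈ insert c s, hitRatio β (X j) n) =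
        hitRatio β (X c) + (fun n => ∑ j ∈ s, hitRatio β (X j) n) := by
      funext n
      simp [Finset.sum_insert ha]
    rw [hfun]
    have hsb : IsBoundedUnder (· ≥ ·) atTop (fun n => ∑ j ∈ s, hitRatio β (X j) n) :=
      isBoundedUnder_of ⟨0, fun n => Finset.sum_nonneg fun j _ => hr_nonneg β (X j) n⟩
    have hsc : IsCoboundedUnder (· ≥ ·) atTop (fun n => ∑ j ∈ s, hitRatio β (X j) n) := by
      refine (isBoundedUnder_of ⟨(s.card : ℝ), fun n => ?_⟩).isCoboundedUnder_ge
      calc ∑ j ∈ s, hitRatio β (X j) n ≤ ∑ _j ∈ s, (1:ℝ) :=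
            Finset.sum_le_sum fun j _ => hr_le_one β (X j) n
        _ = s.card := by simp
    calc liminf (hitRatio β (X c)) atTop + ∑ j ∈ s, liminf (hitRatio β (X j)) atTop
        ≤ liminf (hitRatio β (X c)) atTop + liminf (fun n => ∑ j ∈ s, hitRatio β (X j) n) atTop :=
          add_le_add_right ih _
      _ ≤ liminf (hitRatio β (X c) + fun n => ∑ j ∈ s, hitRatio β (X j) n) atTop :=
          le_liminf_add (hr_bddBelow β (X c)) (hr_bddAbove β (X c)) hsb hsc

lemma card_bound {a : ℝ} (ha0 : 0 < a) {β : ℕ → Ordinal.{0}} {X : Ordinal.{0} → Set Ordinal.{0}}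
    {G : Finset Ordinal.{0}}
    (hd : ∀ j ∈ G, ∀ l ∈ G, j ≠ l → Disjoint (X j) (X l))
    (ha : ∀ j ∈ G, a ≤ liminf (hitRatio β (X j)) atTop) :
    G.card ≤ Nat.floor (1/a) := by
  have h2 : a * G.card ≤ ∑ j ∈ G, liminf (hitRatio β (X j)) atTop := by
    calc a * G.card = ∑ _j ∈ G, a := by rw [Finset.sum_const, nsmul_eq_mul, mul_comm]
      _ ≤ _ := Finset.sum_le_sum ha
  have h3 := lim_sum_ge β X G
  have h4 : liminf (fun n => ∑ j ∈ G, hitRatio β (X j) n) atTop ≤ 1 := by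
    have h : liminf (fun n => ∑ j ∈ G, hitRatio β (X j) n) atTop ≤
        liminf (fun _ : ℕ => (1:ℝ)) atTop := liminf_le_liminf
      (Eventually.of_forall fun n => hr_sum_le_one hd n)
      (isBoundedUnder_of ⟨0, fun n => Finset.sum_nonneg fun j _ => hr_nonneg β (X j) n⟩)
      ((isBoundedUnder_of ⟨1, fun _ => le_rfl⟩).isCoboundedUnder_ge)
    rwa [liminf_const] at h
  have h1 : a * G.card ≤ 1 := le_trans h2 (le_trans h3 h4)
  apply Nat.le_floor
  rw [le_div_iff₀ ha0]
  linarith [mul_comm a (G.card:ℝ)]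


lemma sset_stat {a : ℝ} (ha0 : 0 < a) {S : Set Ordinal.{0}} (hS : S ⊆ limOmega1)
    {α : Ordinal.{0} → ℕ → Ordinal.{0}} (hα : GoodSeq S α)
    (hwit : ∀ A : Set Ordinal.{0}, A ⊆ Set.Iio omega1 → ¬ A.Countable →
      ∃ δ ∈ S, a ≤ liminf (hitRatio (α δ) A) atTop)
    {Z : Set Ordinal.{0}} (hZ : Z ⊆ Set.Iio omega1) (hZc : ¬ Z.Countable) :
    IsStatIn {δ ∈ S | a ≤ liminf (hitRatio (α δ) Z) atTop} := by
  refine ⟨fun δ hδ => (hS hδ.1).1, ?_⟩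
  intro C hC
  set zc : Ordinal.{0} → Ordinal.{0} := fun c => sInf {z | z ∈ Z ∧ c < z} with hzcdef
  have hzc : ∀ c < omega1, zc c ∈ Z ∧ c < zc c := by
    intro c hc
    have hne : {z | z ∈ Z ∧ c < z}.Nonempty := by
      obtain ⟨z, hz1, hz2⟩ := unbounded_of_not_countable hZ hZc hc
      exact ⟨z, hz1, hz2⟩
    exact csInf_mem hne
  have hzc_min : ∀ c, ∀ z ∈ Z, c < z → zc c ≤ z := fun c z hz hcz =>
    csInf_le (OrderBot.bddBelow _) ⟨hz, hcz⟩
  have hZ'Z : zc '' C ⊆ Z := by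
    rintro _ ⟨c, hcC, rfl⟩
    exact (hzc c (hC.1 hcC)).1
  have hZ'c : ¬ (zc '' C).Countable := by
    intro hcc
    apply club_not_countable hC
    have hsub : C ⊆ ⋃ z ∈ zc '' C, {c ∈ C | zc c = z} := fun c hcC =>
      Set.mem_biUnion ⟨c, hcC, rfl⟩ ⟨hcC, rfl⟩
    refine Set.Countable.mono hsub (Set.Countable.biUnion hcc fun z hz => ?_)
    refine (countable_Iio (hZ (hZ'Z hz))).mono ?_
    rintro c ⟨hcC, rfl⟩
    exact (hzc c (hC.1 hcC)).2
  obtain ⟨δ, hδS, hδlim⟩ := hwit (zc '' C) (fun z hz => hZ (hZ'Z hz)) hZ'c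
  obtain ⟨hmono, hlt, hcof⟩ := hα δ hδS
  have hδω : δ < omega1 := (hS hδS).1
  have hδL : Order.IsSuccLimit δ := (hS hδS).2
  have hZlim : a ≤ liminf (hitRatio (α δ) Z) atTop := le_trans hδlim (lim_mono hZ'Z (α δ))
  have hhits : ∀ N, ∃ k, N ≤ k ∧ α δ k ∈ zc '' C := hits_infinite ha0 hδlim
  have hδC : δ ∈ C := by
    apply hC.2.1 δ hδω hδL
    intro b hb
    obtain ⟨n₀, hn₀⟩ := hcof b hb
    obtain ⟨k₁, hk₁n, hk₁Z⟩ := hhits n₀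
    obtain ⟨k₂, hk₂n, hk₂Z⟩ := hhits (k₁+1)
    have h12 : α δ k₁ < α δ k₂ := hmono (Nat.lt_of_succ_le hk₂n)
    obtain ⟨c₂, hc₂C, hc₂eq⟩ := hk₂Z
    have hbk1 : b < α δ k₁ := lt_of_lt_of_le hn₀ (hmono.monotone hk₁n)
    have hck : c₂ < zc c₂ := (hzc c₂ (hC.1 hc₂C)).2
    have h1le : α δ k₁ ≤ c₂ := by
      by_contra hcon
      push_neg at hcon
      have hm := hzc_min c₂ _ (hZ'Z hk₁Z) hcon
      rw [hc₂eq] at hm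
      exact absurd h12 (not_lt.mpr hm)
    refine ⟨c₂, hc₂C, lt_of_lt_of_le hbk1 h1le, ?_⟩
    calc c₂ < zc c₂ := hck
      _ = α δ k₂ := hc₂eq
      _ < δ := hlt k₂
  exact ⟨δ, ⟨hδS, hZlim⟩, hδC⟩


end Claim64

/-- Claim 6.4: let `⟨A_δ : δ ∈ S⟩` (given by the cofinal enumerations `α δ`) witness
`♣_S^{inf ≥ a}` and, for `Y ⊆ ω₁`, let `S(Y)` be the set of `δ ∈ S` where the liminf of
the hit ratio of `Y` along `α δ` is `≥ a`.  Given pairwise disjoint uncountable sets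
`⟨X_i : i < ω₁⟩` of subsets of `ω₁`, there are an uncountable `W ⊆ ω₁` and uncountable
`Y_i ⊆ X_i` for `i ∈ W` such that for every `i ∈ W` and every uncountable `Z ⊆ Y_i`,
the set `S(Z) \ ⋃_{j ∈ W, j < i} S(Y_j)` is stationary. -/
theorem clubSuitInf_claim_64 (a : ℝ) (ha0 : 0 < a) (ha1 : a ≤ 1)
    (S : Set Ordinal.{0}) (hS : S ⊆ limOmega1) (hstat : IsStatIn S)
    (α : Ordinal.{0} → ℕ → Ordinal.{0}) (hα : GoodSeq S α)
    (hwit : ∀ A : Set Ordinal.{0}, A ⊆ Set.Iio omega1 → ¬ A.Countable →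
      ∃ δ ∈ S, a ≤ Filter.liminf (hitRatio (α δ) A) Filter.atTop)
    (X : Ordinal.{0} → Set Ordinal.{0})
    (hX : ∀ i, i < omega1 → X i ⊆ Set.Iio omega1 ∧ ¬ (X i).Countable)
    (hdisj : ∀ i, i < omega1 → ∀ j, j < omega1 → i ≠ j → Disjoint (X i) (X j)) :
    ∃ W : Set Ordinal.{0}, W ⊆ Set.Iio omega1 ∧ ¬ W.Countable ∧
      ∃ Y : Ordinal.{0} → Set Ordinal.{0},
        (∀ i ∈ W, Y i ⊆ X i ∧ ¬ (Y i).Countable) ∧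
        ∀ i ∈ W, ∀ Z : Set Ordinal.{0}, Z ⊆ Y i → ¬ Z.Countable →
          IsStatIn ({δ ∈ S | a ≤ Filter.liminf (hitRatio (α δ) Z) Filter.atTop} \
            ⋃ j ∈ W ∩ Set.Iio i,
              {δ ∈ S | a ≤ Filter.liminf (hitRatio (α δ) (Y j)) Filter.atTop}) := by
    classical
  set m : ℕ := Nat.floor (1/a) with hm
  set SS : Set Ordinal.{0} → Set Ordinal.{0} :=
    (fun Z => {δ ∈ S | a ≤ Filter.liminf (hitRatio (α δ) Z) Filter.atTop}) with hSS
  have hSSsub : ∀ Z, SS Z ⊆ Set.Iio omega1 := fun Z δ hδ => (hS hδ.1).1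
  have hSSstat : ∀ Z, Z ⊆ Set.Iio omega1 → ¬Z.Countable → IsStatIn (SS Z) :=
    fun Z h1 h2 => Claim64.sset_stat ha0 hS hα hwit h1 h2
  have hSSmono : ∀ {Z Z' : Set Ordinal.{0}}, Z ⊆ Z' → SS Z ⊆ SS Z' := by
    intro Z Z' h δ hδ
    exact ⟨hδ.1, le_trans hδ.2 (Claim64.lim_mono h (α δ))⟩
  set D : Ordinal.{0} → Set Ordinal.{0} → ℕ → Set Ordinal.{0} := (fun i Z k =>
    {δ | δ ∈ SS Z ∧ ∃ G : Finset Ordinal.{0}, G.card = k ∧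
      ∀ j ∈ G, i ≤ j ∧ j < omega1 ∧ a ≤ Filter.liminf (hitRatio (α δ) (X j)) Filter.atTop})
    with hD
  have hDsub : ∀ i Z k, D i Z k ⊆ Set.Iio omega1 := fun i Z k δ hδ => hSSsub Z hδ.1
  have hDbound : ∀ i Z k δ, δ ∈ D i Z k → k ≤ m := by
    rintro i Z k δ ⟨_, G, hGcard, hG⟩
    rw [← hGcard, hm]
    apply Claim64.card_bound ha0
    · intro j hj l hl hjl
      exact hdisj j (hG j hj).2.1 l (hG l hl).2.1 hjl
    · intro j hj
      exact (hG j hj).2.2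
  have hDmono : ∀ i k {Z Z' : Set Ordinal.{0}}, Z ⊆ Z' → D i Z k ⊆ D i Z' k := by
    intro i k Z Z' h δ hδ
    exact ⟨hSSmono h hδ.1, hδ.2⟩
  set K : Ordinal.{0} → Set Ordinal.{0} → Set ℕ := (fun i Z => {k | IsStatIn (D i Z k)}) with hK
  have hK0 : ∀ i Z, Z ⊆ Set.Iio omega1 → ¬Z.Countable → 0 ∈ K i Z := by
    intro i Z h1 h2
    have hst := hSSstat Z h1 h2
    exact ⟨hDsub i Z 0, fun C hC => ((hst.2 C hC).imp fun δ hδ =>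
      ⟨⟨hδ.1, ⟨∅, rfl, by simp⟩⟩, hδ.2⟩)⟩
  have hKbdd : ∀ i Z k, k ∈ K i Z → k ≤ m := by
    intro i Z k hk
    obtain ⟨δ, hδ⟩ := Claim64.stat_nonempty hk
    exact hDbound i Z k δ hδ
  set ρ : Ordinal.{0} → Set Ordinal.{0} → ℕ := (fun i Z => sSup (K i Z)) with hρ
  have hρmem : ∀ i Z, Z ⊆ Set.Iio omega1 → ¬Z.Countable → ρ i Z ∈ K i Z := by
    intro i Z h1 h2
    exact Nat.sSup_mem ⟨0, hK0 i Z h1 h2⟩ ⟨m, fun k hk => hKbdd i Z k hk⟩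
  have hρle : ∀ i Z k, k ∈ K i Z → k ≤ ρ i Z := by
    intro i Z k hk
    exact le_csSup ⟨m, fun k' hk' => hKbdd i Z k' hk'⟩ hk
  have hρm : ∀ i Z, Z ⊆ Set.Iio omega1 → ¬Z.Countable → ρ i Z ≤ m :=
    fun i Z h1 h2 => hKbdd i Z _ (hρmem i Z h1 h2)
  have hρmono : ∀ i {Z Z' : Set Ordinal.{0}}, Z ⊆ Set.Iio omega1 → ¬Z.Countable → Z ⊆ Z' →
      ρ i Z ≤ ρ i Z' := by
    intro i Z Z' h1 h2 h
    apply hρle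
    have hmem := hρmem i Z h1 h2
    exact ⟨hDsub i Z' _, fun C hC => ((hmem.2 C hC).imp fun δ hδ =>
      ⟨hDmono i _ h hδ.1, hδ.2⟩)⟩
  have hYex : ∀ i : Ordinal.{0}, ∃ Y₀ : Set Ordinal.{0}, i < omega1 →
      Y₀ ⊆ X i ∧ ¬Y₀.Countable ∧ ∀ Z, Z ⊆ Y₀ → ¬Z.Countable → ρ i Z = ρ i Y₀ := by
    intro i
    by_cases hi : i < omega1
    · obtain ⟨hXsub, hXc⟩ := hX i hi
      have hVne : {k : ℕ | ∃ Y₀ : Set Ordinal.{0}, Y₀ ⊆ X i ∧ ¬Y₀.Countable ∧ ρ i Y₀ = k}.Nonempty :=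
        ⟨ρ i (X i), X i, subset_rfl, hXc, rfl⟩
      obtain ⟨Y₀, hY₀sub, hY₀c, hY₀ρ⟩ := Nat.sInf_mem hVne
      refine ⟨Y₀, fun _ => ⟨hY₀sub, hY₀c, ?_⟩⟩
      intro Z hZY hZc
      have hle : ρ i Z ≤ ρ i Y₀ :=
        hρmono i (fun z hz => hXsub (hY₀sub (hZY hz))) hZc hZY
      have hge : sInf {k : ℕ | ∃ Y₀ : Set Ordinal.{0}, Y₀ ⊆ X i ∧ ¬Y₀.Countable ∧ ρ i Y₀ = k}
          ≤ ρ i Z := Nat.sInf_le ⟨Z, fun z hz => hY₀sub (hZY hz), hZc, rfl⟩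
      rw [← hY₀ρ] at hge
      omega
    · exact ⟨∅, fun h => absurd h hi⟩
  choose Y hY using hYex
  have hpigeon : ∃ r, r ≤ m ∧ ¬ {i : Ordinal.{0} | i < omega1 ∧ ρ i (Y i) = r}.Countable := by
    by_contra hc
    push_neg at hc
    have hsub : Set.Iio omega1 ⊆
        ⋃ r ∈ Set.Iic m, {i : Ordinal.{0} | i < omega1 ∧ ρ i (Y i) = r} := by
      intro i hi
      have hρb : ρ i (Y i) ≤ m := by
        obtain ⟨hYs, hYc, _⟩ := hY i hi
        exact hρm i (Y i) (fun z hz => (hX i hi).1 (hYs hz)) hYc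
      exact Set.mem_biUnion hρb ⟨hi, rfl⟩
    exact Claim64.not_countable_Iio (Set.Countable.mono hsub
      (Set.Countable.biUnion (Set.to_countable _) fun r hr => hc r hr))
  obtain ⟨r, hrm, hWc⟩ := hpigeon
  refine ⟨{i : Ordinal.{0} | i < omega1 ∧ ρ i (Y i) = r}, fun i hi => hi.1, hWc, Y, ?_, ?_⟩
  · intro i hi
    obtain ⟨h1, h2, _⟩ := hY i hi.1
    exact ⟨h1, h2⟩
  · intro i hiW Z hZY hZc
    obtain ⟨hYsub, hYc, hYρ⟩ := hY i hiW.1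
    have hZX : Z ⊆ Set.Iio omega1 := fun z hz => (hX i hiW.1).1 (hYsub (hZY hz))
    have hρZ : ρ i Z = r := by
      rw [hYρ Z hZY hZc]
      exact hiW.2
    have hTstat : IsStatIn (D i Z r) := by
      have hmem := hρmem i Z hZX hZc
      rw [hρZ] at hmem
      exact hmem
    have hJc : ({i' : Ordinal.{0} | i' < omega1 ∧ ρ i' (Y i') = r} ∩ Set.Iio i).Countable :=
      (Claim64.countable_Iio hiW.1).mono Set.inter_subset_right
    have hmain := Claim64.stat_diff hTstat hJc (fun j => SS (Y j)) ?_
    · refine ⟨fun δ hδ => (hS hδ.1.1).1, fun C hC => ((hmain.2 C hC).imp fun δ hδ => ?_)⟩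
      exact ⟨⟨hδ.1.1.1, hδ.1.2⟩, hδ.2⟩
    · rintro j ⟨hjW, hji⟩ hstatj
      obtain ⟨hYjsub, hYjc, _⟩ := hY j hjW.1
      have hsup : D i Z r ∩ SS (Y j) ⊆ D j (Y j) (r+1) := by
        rintro δ ⟨⟨hδSS, G, hGcard, hG⟩, hδSSj⟩
        refine ⟨hδSSj, insert j G, ?_, ?_⟩
        · rw [Finset.card_insert_of_notMem, hGcard]
          intro hjG
          exact absurd (hG j hjG).1 (not_le.mpr hji)
        · intro l hl
          rcases Finset.mem_insert.mp hl with rfl | hlG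
          · exact ⟨le_rfl, hjW.1, le_trans hδSSj.2 (Claim64.lim_mono hYjsub (α δ))⟩
          · obtain ⟨h1, h2, h3⟩ := hG l hlG
            exact ⟨le_trans (le_of_lt hji) h1, h2, h3⟩
      have hstat' : IsStatIn (D j (Y j) (r+1)) :=
        ⟨hDsub _ _ _, fun C hC => ((hstatj.2 C hC).imp fun δ hδ => ⟨hsup hδ.1, hδ.2⟩)⟩
      have hge : r + 1 ≤ ρ j (Y j) := hρle j (Y j) (r+1) hstat'
      rw [hjW.2] at hge
      omega
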